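/- arXiv:2205.04691 — 2 statements merged into one kernel-verified Lean document; each statement's English description precedes it below -/
import Mathlib

section
/- Let T > 0 and 0 < ε ≤ δ/2 be real numbers, let m be a natural number, and set P(m) = T^{m+1}·(1/(T+δ−ε)^{m+1} − 1/(T+δ+ε)^{m+1}). Then for every natural number d ≥ 1, Q_{P(m)}(m, d) ≤ m / (1 + (δ−ε)/T)^{m+1}. -/
/-- The binomial upper-tail probability `Q_p(m,d) = Σ_{l=d}^{m-1} C(m-1,l) p^l (1-p)^{m-1-l}`. -/
noncomputable def Qtail (p : ℝ) (m d : ℕ) : ℝ :=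
  ∑ l ∈ Finset.Ico d m, (Nat.choose (m - 1) l : ℝ) * p ^ l * (1 - p) ^ (m - 1 - l)

/-- For `T > 0`, `0 < ε ≤ δ/2` and `P(m) = T^{m+1}(1/(T+δ-ε)^{m+1} - 1/(T+δ+ε)^{m+1})`,
one has `Q_{P(m)}(m,d) ≤ m / (1 + (δ-ε)/T)^{m+1}` for all `d ≥ 1`. -/
theorem Qtail_le_geom (T ε δ : ℝ) (hT : 0 < T) (hε : 0 < ε) (hεδ : ε ≤ δ / 2) (m : ℕ)
    (P : ℝ) (hP : P = T ^ (m + 1) * (1 / (T + δ - ε) ^ (m + 1) - 1 / (T + δ + ε) ^ (m + 1)))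
    (d : ℕ) (hd : 1 ≤ d) :
    Qtail P m d ≤ m / (1 + (δ - ε) / T) ^ (m + 1) := by
  have ha : 0 < T + δ - ε := by linarith
  have hb : 0 < T + δ + ε := by linarith
  set q : ℝ := (T / (T + δ - ε)) ^ (m + 1) with hq
  have hq0 : 0 ≤ q := by positivity
  have hP0 : 0 ≤ P := by
    rw [hP]
    apply mul_nonneg (pow_nonneg hT.le _)
    have h1 : (T + δ - ε) ^ (m + 1) ≤ (T + δ + ε) ^ (m + 1) :=
      pow_le_pow_left₀ ha.le (by linarith) _
    have h2 := one_div_le_one_div_of_le (pow_pos ha _) h1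
    linarith
  have hPq : P ≤ q := by
    rw [hP, hq, div_pow]
    have h3 : (0:ℝ) ≤ 1 / (T + δ + ε) ^ (m + 1) := by positivity
    have h4 : (0:ℝ) < T ^ (m + 1) := pow_pos hT _
    calc T ^ (m + 1) * (1 / (T + δ - ε) ^ (m + 1) - 1 / (T + δ + ε) ^ (m + 1))
        ≤ T ^ (m + 1) * (1 / (T + δ - ε) ^ (m + 1)) := by
          apply mul_le_mul_of_nonneg_left _ h4.le
          linarith
      _ = T ^ (m + 1) / (T + δ - ε) ^ (m + 1) := by ring
  have hq1 : q ≤ 1 := by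
    apply pow_le_one₀ (by positivity)
    rw [div_le_one ha]; linarith
  have hP1 : P ≤ 1 := hPq.trans hq1
  have hRHS : (m:ℝ) / (1 + (δ - ε) / T) ^ (m + 1) = m * q := by
    have h5 : 1 + (δ - ε) / T = (T + δ - ε) / T := by field_simp; ring
    rw [h5, hq, div_pow, div_pow, div_div_eq_mul_div]
    ring
  rw [hRHS]
  cases m with
  | zero =>
      have : Finset.Ico d 0 = ∅ := by simp
      simp [Qtail, this]
  | succ n =>
      have hsub : Finset.Ico d (n + 1) ⊆ Finset.Ico 1 (n + 1) :=
        Finset.Ico_subset_Ico hd le_rfl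
      have step1 : Qtail P (n + 1) d ≤ Qtail P (n + 1) 1 := by
        apply Finset.sum_le_sum_of_subset_of_nonneg hsub
        intro i _ _
        have : (0:ℝ) ≤ 1 - P := by linarith
        positivity
      have step2 : Qtail P (n + 1) 1 = 1 - (1 - P) ^ n := by
        unfold Qtail
        have hbin : (P + (1 - P)) ^ n =
            ∑ k ∈ Finset.range (n + 1), P ^ k * (1 - P) ^ (n - k) * (Nat.choose n k : ℝ) :=
          add_pow P (1 - P) n
        have hone : (∑ k ∈ Finset.range (n + 1),
            P ^ k * (1 - P) ^ (n - k) * (Nat.choose n k : ℝ)) = 1 := by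
          rw [← hbin]; simp
        have hsplit := Finset.sum_Ico_eq_sub
          (fun k => P ^ k * (1 - P) ^ (n - k) * (Nat.choose n k : ℝ))
          (Nat.one_le_iff_ne_zero.mpr (Nat.succ_ne_zero n) |> fun _ => Nat.succ_le_succ (Nat.zero_le n))
        simp only [Nat.add_sub_cancel]
        have : (∑ l ∈ Finset.Ico 1 (n + 1), (Nat.choose n l : ℝ) * P ^ l * (1 - P) ^ (n - l))
            = (∑ k ∈ Finset.range (n + 1), P ^ k * (1 - P) ^ (n - k) * (Nat.choose n k : ℝ))
              - (∑ k ∈ Finset.range 1, P ^ k * (1 - P) ^ (n - k) * (Nat.choose n k : ℝ)) := by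
          rw [← Finset.sum_Ico_eq_sub _ (Nat.succ_le_succ (Nat.zero_le n))]
          apply Finset.sum_congr rfl
          intro x _; ring
        rw [this, hone]
        simp
      have step3 : 1 - (1 - P) ^ n ≤ n * P := by
        have hb2 : (-2:ℝ) ≤ -P := by linarith
        have := one_add_mul_le_pow hb2 n
        have h6 : (1 + -P) = 1 - P := by ring
        rw [h6] at this
        nlinarith
      have step4 : (n:ℝ) * P ≤ (n + 1 : ℕ) * q := by
        have h7 : (n:ℝ) ≤ ((n + 1 : ℕ) : ℝ) := by push_cast; linarith
        have h8 : (0:ℝ) ≤ ((n + 1 : ℕ) : ℝ) := by positivity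
        calc (n:ℝ) * P ≤ (n:ℝ) * q := by
              apply mul_le_mul_of_nonneg_left hPq (by positivity)
          _ ≤ ((n + 1 : ℕ) : ℝ) * q := mul_le_mul_of_nonneg_right h7 hq0
      linarith
end

section
/- Let T > 0 and 0 < ε ≤ δ/2 be real numbers, let d ≥ 1 be a natural number, and for each natural number m set P(m) = T^{m+1}·(1/(T+δ−ε)^{m+1} − 1/(T+δ+ε)^{m+1}) and Q(m, d) = Q_{P(m)}(m, d). Then lim_{m→∞} Q(m, d) = 0, i.e., the sequence m ↦ Q(m, d) tends to 0. -/
/-- For `T > 0`, `0 < ε ≤ δ/2`, `d ≥ 1`, and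
`P(m) = T^{m+1}(1/(T+δ-ε)^{m+1} - 1/(T+δ+ε)^{m+1})`, the sequence
`m ↦ Q_{P(m)}(m,d)` tends to `0` as `m → ∞`. -/
theorem Qtail_tendsto_zero (T ε δ : ℝ) (hT : 0 < T) (hε : 0 < ε) (hεδ : ε ≤ δ / 2)
    (d : ℕ) (hd : 1 ≤ d)
    (P : ℕ → ℝ)
    (hP : ∀ m : ℕ,
      P m = T ^ (m + 1) * (1 / (T + δ - ε) ^ (m + 1) - 1 / (T + δ + ε) ^ (m + 1))) :
    Filter.Tendsto (fun m : ℕ => Qtail (P m) m d) Filter.atTop (nhds 0) := by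
  set A : ℝ := T + δ - ε with hA
  set B : ℝ := T + δ + ε with hB
  have hTA : T < A := by
    simp only [hA]; linarith
  have hA0 : 0 < A := lt_trans hT hTA
  have hAB : A ≤ B := by simp only [hA, hB]; linarith
  set r : ℝ := T / A with hr
  have hr0 : 0 ≤ r := div_nonneg hT.le hA0.le
  have hr1 : r < 1 := (div_lt_one hA0).mpr hTA
  -- basic bounds on P
  have hPnn : ∀ m : ℕ, 0 ≤ P m := by
    intro m
    rw [hP m]
    apply mul_nonneg (pow_nonneg hT.le _)
    have : (1 : ℝ) / B ^ (m + 1) ≤ 1 / A ^ (m + 1) := by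
      apply one_div_le_one_div_of_le (pow_pos hA0 _)
      exact pow_le_pow_left₀ hA0.le hAB _
    linarith
  have hPle : ∀ m : ℕ, P m ≤ r ^ (m + 1) := by
    intro m
    rw [hP m, hr, div_pow]
    have hB0 : 0 < B := lt_of_lt_of_le hA0 hAB
    have h1 : (0 : ℝ) ≤ 1 / B ^ (m + 1) := by positivity
    have h2 : T ^ (m + 1) * (1 / A ^ (m + 1) - 1 / B ^ (m + 1)) ≤
        T ^ (m + 1) * (1 / A ^ (m + 1)) := by
      apply mul_le_mul_of_nonneg_left _ (pow_nonneg hT.le _)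
      linarith
    calc T ^ (m + 1) * (1 / A ^ (m + 1) - 1 / B ^ (m + 1))
        ≤ T ^ (m + 1) * (1 / A ^ (m + 1)) := h2
      _ = T ^ (m + 1) / A ^ (m + 1) := by ring
  have hP1 : ∀ m : ℕ, P m ≤ 1 := fun m =>
    le_trans (hPle m) (pow_le_one₀ hr0 hr1.le)
  -- geometric upper bound sequence
  set r' : ℝ := r ^ d with hr'
  have hr'0 : 0 ≤ r' := pow_nonneg hr0 _
  have hr'1 : r' < 1 := pow_lt_one₀ hr0 hr1 (by omega)
  have hg : Filter.Tendsto (fun m : ℕ => (m : ℝ) ^ (d + 1) * r' ^ m)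
      Filter.atTop (nhds 0) := by
    have hs := summable_pow_mul_geometric_of_norm_lt_one (R := ℝ) (d + 1)
      (r := r') (by rw [Real.norm_eq_abs, abs_of_nonneg hr'0]; exact hr'1)
    exact hs.tendsto_atTop_zero
  -- eventually m * P m ≤ 1
  have hmr : Filter.Tendsto (fun m : ℕ => (m : ℝ) * r ^ m) Filter.atTop (nhds 0) := by
    have hs := summable_pow_mul_geometric_of_norm_lt_one (R := ℝ) 1
      (r := r) (by rw [Real.norm_eq_abs, abs_of_nonneg hr0]; exact hr1)
    have := hs.tendsto_atTop_zero
    simpa using this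
  have hev : ∀ᶠ m : ℕ in Filter.atTop, (m : ℝ) * P m ≤ 1 := by
    have h1 : ∀ᶠ m : ℕ in Filter.atTop, (m : ℝ) * r ^ m ≤ 1 := by
      have := hmr.eventually (eventually_le_nhds (by norm_num : (0:ℝ) < 1))
      filter_upwards [this] with m hm using hm
    filter_upwards [h1] with m hm
    calc (m : ℝ) * P m ≤ (m : ℝ) * r ^ (m + 1) :=
          mul_le_mul_of_nonneg_left (hPle m) (Nat.cast_nonneg m)
      _ ≤ (m : ℝ) * r ^ m := by
          apply mul_le_mul_of_nonneg_left _ (Nat.cast_nonneg m)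
          exact pow_le_pow_of_le_one hr0 hr1.le (Nat.le_succ m)
      _ ≤ 1 := hm
  apply squeeze_zero' (g := fun m : ℕ => (m : ℝ) ^ (d + 1) * r' ^ m) _ _ hg
  · -- nonnegativity
    filter_upwards with m
    apply Finset.sum_nonneg
    intro l _
    have h0 : (0 : ℝ) ≤ P m := hPnn m
    have h1 : (0 : ℝ) ≤ 1 - P m := by linarith [hP1 m]
    positivity
  · -- upper bound
    filter_upwards [hev] with m hm
    have hpnn := hPnn m
    have hmp0 : 0 ≤ (m : ℝ) * P m := mul_nonneg (Nat.cast_nonneg m) hpnn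
    have hstep : Qtail (P m) m d ≤ (m : ℝ) * ((m : ℝ) * P m) ^ d := by
      unfold Qtail
      calc ∑ l ∈ Finset.Ico d m, (Nat.choose (m - 1) l : ℝ) * P m ^ l * (1 - P m) ^ (m - 1 - l)
          ≤ ∑ l ∈ Finset.Ico d m, ((m : ℝ) * P m) ^ d := by
            apply Finset.sum_le_sum
            intro l hl
            have hld : d ≤ l := (Finset.mem_Ico.mp hl).1
            have h1 : (1 - P m) ^ (m - 1 - l) ≤ 1 :=
              pow_le_one₀ (by linarith [hP1 m]) (by linarith [hPnn m])
            have h2 : (Nat.choose (m - 1) l : ℝ) ≤ (m : ℝ) ^ l := by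
              calc (Nat.choose (m - 1) l : ℝ) ≤ ((m - 1 : ℕ) : ℝ) ^ l := by
                    exact_mod_cast Nat.choose_le_pow (m - 1) l
                _ ≤ (m : ℝ) ^ l := by
                    apply pow_le_pow_left₀ (Nat.cast_nonneg _)
                    exact_mod_cast Nat.sub_le m 1
            have hchoose_nn : (0 : ℝ) ≤ (Nat.choose (m - 1) l : ℝ) := Nat.cast_nonneg _
            calc (Nat.choose (m - 1) l : ℝ) * P m ^ l * (1 - P m) ^ (m - 1 - l)
                ≤ (Nat.choose (m - 1) l : ℝ) * P m ^ l * 1 := by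
                  apply mul_le_mul_of_nonneg_left h1
                  exact mul_nonneg hchoose_nn (pow_nonneg hpnn _)
              _ = (Nat.choose (m - 1) l : ℝ) * P m ^ l := by ring
              _ ≤ (m : ℝ) ^ l * P m ^ l :=
                  mul_le_mul_of_nonneg_right h2 (pow_nonneg hpnn _)
              _ = ((m : ℝ) * P m) ^ l := (mul_pow _ _ _).symm
              _ ≤ ((m : ℝ) * P m) ^ d := pow_le_pow_of_le_one hmp0 hm hld
        _ = ((Finset.Ico d m).card : ℝ) * ((m : ℝ) * P m) ^ d := by
            rw [Finset.sum_const, nsmul_eq_mul]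
        _ ≤ (m : ℝ) * ((m : ℝ) * P m) ^ d := by
            apply mul_le_mul_of_nonneg_right _ (pow_nonneg hmp0 _)
            rw [Nat.card_Ico]
            exact_mod_cast Nat.sub_le m d
    calc Qtail (P m) m d ≤ (m : ℝ) * ((m : ℝ) * P m) ^ d := hstep
      _ = (m : ℝ) ^ (d + 1) * P m ^ d := by rw [mul_pow]; ring
      _ ≤ (m : ℝ) ^ (d + 1) * r' ^ m := by
          apply mul_le_mul_of_nonneg_left _ (pow_nonneg (Nat.cast_nonneg m) _)
          calc P m ^ d ≤ (r ^ m) ^ d := by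
                apply pow_le_pow_left₀ hpnn
                exact le_trans (hPle m) (pow_le_pow_of_le_one hr0 hr1.le (Nat.le_succ m))
            _ = r' ^ m := by rw [hr', ← pow_mul, ← pow_mul, Nat.mul_comm]
end
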